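/- arXiv:1209.0253 — 3 statements merged into one kernel-verified Lean document; each statement's English description precedes it below -/
import Mathlib

section
/- If importance weights are defined by ω^k = p(y|x'^k) p(u^k) / (g(u^k|y, x^k) g(y|x^k)) with u^k drawn from g(u|y, x^k), x^k drawn from the resampling distribution proportional to g(y|x^j) π^j over atoms {x^j}, and x'^k = h(x^k, u^k), then E[ (Σ_j g(y|x^j) π^j) · ω^k ] = Σ_j p(y|x^j) π^j, where p(y|x) = ∫ p(y|h(x,u)) p(u) du. -/
open MeasureTheory Finset

/-- Conditional unbiasedness of the one-step ADPF weight: if `x̃^k` is drawn from the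
resampling distribution with probabilities proportional to `g(y|x^j) π^j`, `u^k` is drawn
from `g(u|y, x̃^k)`, `x'^k = h(x̃^k, u^k)`, and
`ω^k = p(y|x'^k) p(u^k) / (g(u^k|y, x̃^k) g(y|x̃^k))`, then
`E[(Σ_j g(y|x^j) π^j) ω^k] = Σ_j p(y|x^j) π^j` with `p(y|x) = ∫ p(y|h(x,u)) p(u) du`. -/
theorem adpf_one_step_unbiased
    {N : ℕ} (x : Fin N → ℝ) (π : Fin N → ℝ)
    (hπ0 : ∀ j, 0 ≤ π j) (hπ1 : ∑ j, π j = 1)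
    (g : ℝ → ℝ)              -- first-stage proposal density g(y | x), y fixed
    (gu : ℝ → ℝ → ℝ)         -- second-stage proposal density g(u | y, x), y fixed
    (p : ℝ → ℝ)              -- observation density p(y | x'), y fixed
    (pu : ℝ → ℝ)             -- disturbance density
    (h : ℝ → ℝ → ℝ)          -- transition x' = h(x, u)
    (hg : ∀ z, 0 < g z) (hgu : ∀ u z, 0 < gu u z)
    (hgu1 : ∀ z, ∫ u, gu u z = 1)
    (hp0 : ∀ z, 0 ≤ p z) (hpu0 : ∀ u, 0 ≤ pu u)
    (hint : ∀ j, Integrable (fun u => p (h (x j) u) * pu u)) :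
    (∑ j, g (x j) * π j) *
        (∑ j, (g (x j) * π j / ∑ i, g (x i) * π i) *
          ∫ u, (p (h (x j) u) * pu u / (gu u (x j) * g (x j))) * gu u (x j))
      = ∑ j, (∫ u, p (h (x j) u) * pu u) * π j := by
  have hS : (0:ℝ) < ∑ i, g (x i) * π i := by
    by_contra hc
    push_neg at hc
    have hle : ∑ i, g (x i) * π i ≤ 0 := hc
    have hge : (0:ℝ) ≤ ∑ i, g (x i) * π i :=
      Finset.sum_nonneg fun i _ => mul_nonneg (hg (x i)).le (hπ0 i)
    have hz : ∑ i, g (x i) * π i = 0 := le_antisymm hle hge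
    have hall : ∀ i ∈ Finset.univ, g (x i) * π i = 0 :=
      (Finset.sum_eq_zero_iff_of_nonneg
        (fun i _ => mul_nonneg (hg (x i)).le (hπ0 i))).mp hz
    have : ∑ j, π j = 0 := Finset.sum_eq_zero fun j _ => by
      have := hall j (Finset.mem_univ j)
      rcases mul_eq_zero.mp this with h1 | h2
      · exact absurd h1 (hg (x j)).ne'
      · exact h2
    rw [hπ1] at this; norm_num at this
  have hInt : ∀ j, (∫ u, (p (h (x j) u) * pu u / (gu u (x j) * g (x j))) * gu u (x j))
      = (∫ u, p (h (x j) u) * pu u) / g (x j) := by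
    intro j
    rw [← integral_div]
    congr 1
    funext u
    have hb := (hgu u (x j)).ne'
    have hc := (hg (x j)).ne'
    field_simp
  rw [Finset.mul_sum]
  refine Finset.sum_congr rfl fun j _ => ?_
  rw [hInt j]
  have hgne := (hg (x j)).ne'
  field_simp
end

section
/- In the limit of zero measurement noise (σ_ε → 0) in the model y = φ x + σ_u(u + δu²) + σ_ε ε with ε ~ N(0,1) and prior u ~ N(0,1), the posterior distribution of u given y concentrates on the (at most two) roots u⁽¹⁾, u⁽²⁾ of the quadratic σ_u δ u² + σ_u u + φx - y = 0, with limiting weights proportional to φ(u⁽ⁱ⁾; 0,1)/|σ_u(1 + 2δ u⁽ⁱ⁾)|, where φ(·;0,1) is the standard normal density. -/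
open Filter MeasureTheory Real

private lemma C_nonneg {f : ℝ → ℝ} {C : ℝ} (hC : ∀ u, |f u| ≤ C * Real.exp (-u ^ 2 / 2)) :
    0 ≤ C := by
  have := hC 0
  simp at this
  exact le_trans (abs_nonneg _) this

private lemma gauss_integrable : Integrable (fun u : ℝ => Real.exp (-u ^ 2 / 2)) := by
  have h := integrable_exp_neg_mul_sq (b := (1 : ℝ)/2) (by norm_num)
  have e : (fun u : ℝ => Real.exp (-u ^ 2 / 2)) = fun u : ℝ => Real.exp (-(1/2) * u ^ 2) := by
    funext u; congr 1; ring
  rw [e]; exact h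

private lemma gauss_int (c : ℝ) (hc : c ≠ 0) :
    (∫ v : ℝ, Real.exp (-(c * v) ^ 2 / 2)) = Real.sqrt (2 * Real.pi) / |c| := by
  have e : (fun v : ℝ => Real.exp (-(c * v) ^ 2 / 2))
      = fun v : ℝ => Real.exp (-(c ^ 2 / 2) * v ^ 2) := by
    funext v; congr 1; ring
  rw [e, integral_gaussian]
  have hπ : (0:ℝ) ≤ 2 * Real.pi := by positivity
  have h2 : Real.pi / (c ^ 2 / 2) = (2 * Real.pi) / c ^ 2 := by
    field_simp
  rw [h2, Real.sqrt_div hπ, Real.sqrt_sq_eq_abs]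

private lemma gauss_int_one : (∫ u : ℝ, Real.exp (-u ^ 2 / 2)) = Real.sqrt (2 * Real.pi) := by
  have := gauss_int 1 one_ne_zero
  simpa using this

private lemma integ_aux {f g : ℝ → ℝ} (hf : Continuous f) (hg : Continuous g) {C : ℝ}
    (hC : ∀ u, |f u| ≤ C * Real.exp (-u ^ 2 / 2)) (hg1 : ∀ u, |g u| ≤ 1) :
    Integrable (fun u => f u * g u) := by
  have hC0 : 0 ≤ C := C_nonneg hC
  refine (gauss_integrable.const_mul C).mono ((hf.mul hg).aestronglyMeasurable)
    (ae_of_all _ fun u => ?_)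
  rw [Real.norm_eq_abs, Real.norm_eq_abs, abs_mul]
  have h1 : |f u| * |g u| ≤ (C * Real.exp (-u ^ 2 / 2)) * 1 :=
    mul_le_mul (hC u) (hg1 u) (abs_nonneg _) (by positivity)
  rw [abs_of_nonneg (by positivity : (0:ℝ) ≤ C * Real.exp (-u ^ 2 / 2))]
  simpa using h1

private lemma tendsto_tail (c : ℝ) (hc : 0 < c) :
    Tendsto (fun σ : ℝ => Real.exp (-(c/σ) ^ 2 / 2) / σ) (nhdsWithin 0 (Set.Ioi 0)) (nhds 0) := by
  -- s * exp (-2s) → 0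
  have base : Tendsto (fun s : ℝ => s * Real.exp (-s)) atTop (nhds 0) := by
    simpa using Real.tendsto_pow_mul_exp_neg_atTop_nhds_zero 1
  have h2s : Tendsto (fun s : ℝ => s * Real.exp (-(2*s))) atTop (nhds 0) := by
    have hcomp : Tendsto (fun s : ℝ => (2*s) * Real.exp (-(2*s))) atTop (nhds 0) :=
      base.comp (Filter.tendsto_id.const_mul_atTop (by norm_num : (0:ℝ) < 2))
    have := hcomp.const_mul (1/2 : ℝ)
    simp only [mul_zero] at this
    refine this.congr fun s => by ring
  set k : ℝ := c ^ 2 / 2 with hk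
  have hk0 : 0 < k := by positivity
  -- s * exp (-k s^2) → 0 by squeeze
  have hsq : Tendsto (fun s : ℝ => s * Real.exp (-k * s ^ 2)) atTop (nhds 0) := by
    refine squeeze_zero' ?_ ?_ h2s
    · filter_upwards [eventually_ge_atTop (0:ℝ)] with s hs
      positivity
    · filter_upwards [eventually_ge_atTop (max 1 (2/k))] with s hs
      have hs1 : (1:ℝ) ≤ s := le_trans (le_max_left _ _) hs
      have hs2 : 2/k ≤ s := le_trans (le_max_right _ _) hs
      have : 2*s ≤ k * s ^ 2 := by
        have : 2 ≤ k * s := by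
          rw [div_le_iff₀ hk0] at hs2; linarith [mul_comm s k]
        nlinarith
      have hexp : Real.exp (-k * s ^ 2) ≤ Real.exp (-(2*s)) := by
        apply Real.exp_le_exp.2; linarith
      exact mul_le_mul_of_nonneg_left hexp (by linarith)
  have hinv : Tendsto (fun σ : ℝ => σ⁻¹) (nhdsWithin 0 (Set.Ioi 0)) atTop :=
    tendsto_inv_nhdsGT_zero
  have hcomp := hsq.comp hinv
  refine hcomp.congr' ?_
  filter_upwards [self_mem_nhdsWithin] with σ hσ
  have hσ0 : σ ≠ 0 := ne_of_gt hσ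
  show σ⁻¹ * Real.exp (-k * (σ⁻¹) ^ 2) = Real.exp (-(c/σ) ^ 2 / 2) / σ
  rw [show -k * (σ⁻¹) ^ 2 = -(c/σ) ^ 2 / 2 by rw [hk]; field_simp]
  exact (mul_comm _ _).trans (div_eq_mul_inv _ _).symm

private lemma root_limit (a p q : ℝ) (ha : a ≠ 0) {C r : ℝ} (hr0 : 0 < r)
    (hr : r ≤ |p - q| / 2) {f : ℝ → ℝ} (hf : Continuous f)
    (hC : ∀ u, |f u| ≤ C * Real.exp (-u ^ 2 / 2)) :
    Tendsto (fun σ : ℝ => ∫ v, Set.indicator {v : ℝ | σ * |v| < r}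
        (fun v => f (p + σ * v) * Real.exp (-(a * v * (p + σ * v - q)) ^ 2 / 2)) v)
      (nhdsWithin 0 (Set.Ioi 0))
      (nhds (f p * (Real.sqrt (2 * Real.pi) / |a * (p - q)|))) := by
  have hC0 : 0 ≤ C := C_nonneg hC
  have hpq : p - q ≠ 0 := by
    intro h
    rw [h] at hr
    simp at hr
    linarith
  have hapq : a * (p - q) ≠ 0 := mul_ne_zero ha hpq
  set b : ℝ := (a * (p - q)) ^ 2 / 8 with hb
  have hb0 : 0 < b := by positivity
  have key : Tendsto (fun σ : ℝ => ∫ v, Set.indicator {v : ℝ | σ * |v| < r}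
        (fun v => f (p + σ * v) * Real.exp (-(a * v * (p + σ * v - q)) ^ 2 / 2)) v)
      (nhdsWithin 0 (Set.Ioi 0))
      (nhds (∫ v : ℝ, f p * Real.exp (-(a * v * (p - q)) ^ 2 / 2))) := by
    refine tendsto_integral_filter_of_dominated_convergence
      (fun v => C * Real.exp (-b * v ^ 2)) ?_ ?_ ?_ ?_
    · filter_upwards with σ
      have hopen : IsOpen {v : ℝ | σ * |v| < r} :=
        isOpen_lt (continuous_const.mul continuous_abs) continuous_const
      exact (((hf.comp (continuous_const.add (continuous_const.mul continuous_id))).mul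
        (((continuous_const.mul continuous_id).mul
          ((continuous_const.add (continuous_const.mul continuous_id)).sub continuous_const)).pow 2
          |>.neg.div_const 2).rexp).aestronglyMeasurable).indicator hopen.measurableSet
    · filter_upwards [self_mem_nhdsWithin] with σ hσ
      refine ae_of_all _ fun v => ?_
      rw [Real.norm_eq_abs]
      by_cases hv : v ∈ {v : ℝ | σ * |v| < r}
      · rw [Set.indicator_of_mem hv]
        have hvr : σ * |v| < r := hv

        have habs : |p - q| / 2 ≤ |p + σ * v - q| := by
          have h1 : |p - q| - |σ * v| ≤ |p + σ * v - q| := by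
            have := abs_sub_abs_le_abs_sub (p - q) (-(σ * v))
            simp only [abs_neg] at this
            calc |p - q| - |σ * v| ≤ |p - q - -(σ*v)| := this
              _ = |p + σ * v - q| := by ring_nf
          have h2 : |σ * v| = σ * |v| := by
            rw [abs_mul, abs_of_pos hσ]
          linarith
        have hsq : (a * (p - q)) ^ 2 / 4 * v ^ 2 ≤ (a * v * (p + σ * v - q)) ^ 2 := by
          have h3 : (p - q) ^ 2 / 4 ≤ (p + σ * v - q) ^ 2 := by
            nlinarith [sq_abs (p - q), sq_abs (p + σ * v - q), abs_nonneg (p - q)]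
          nlinarith [sq_nonneg (a * v), sq_nonneg v, sq_nonneg a]
        have hexp1 : Real.exp (-(a * v * (p + σ * v - q)) ^ 2 / 2) ≤ Real.exp (-b * v ^ 2) := by
          apply Real.exp_le_exp.2
          rw [hb]; nlinarith
        have hexp2 : |f (p + σ * v)| ≤ C := by
          refine le_trans (hC _) ?_
          have : Real.exp (-(p + σ * v) ^ 2 / 2) ≤ 1 := by
            rw [show (1:ℝ) = Real.exp 0 by simp]
            apply Real.exp_le_exp.2; nlinarith [sq_nonneg (p + σ * v)]
          nlinarith [Real.exp_pos (-(p + σ * v) ^ 2 / 2)]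
        rw [abs_mul]
        have := Real.exp_pos (-(a * v * (p + σ * v - q)) ^ 2 / 2)
        rw [abs_of_pos this]
        exact mul_le_mul hexp2 hexp1 (le_of_lt this) hC0
      · rw [Set.indicator_of_notMem hv]
        simp only [abs_zero]
        positivity
    · exact (integrable_exp_neg_mul_sq hb0).const_mul C
    · refine ae_of_all _ fun v => ?_
      have hev : ∀ᶠ σ in nhdsWithin (0:ℝ) (Set.Ioi 0), σ * |v| < r := by
        have ht : Tendsto (fun σ : ℝ => σ * |v|) (nhdsWithin 0 (Set.Ioi 0)) (nhds 0) := by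
          have : Tendsto (fun σ : ℝ => σ * |v|) (nhds 0) (nhds (0 * |v|)) :=
            (continuous_id.mul continuous_const).tendsto 0
          simpa using this.mono_left nhdsWithin_le_nhds
        exact ht.eventually_lt_const hr0
      have hcont : Tendsto (fun σ : ℝ => f (p + σ * v) *
          Real.exp (-(a * v * (p + σ * v - q)) ^ 2 / 2)) (nhdsWithin 0 (Set.Ioi 0))
          (nhds (f p * Real.exp (-(a * v * (p - q)) ^ 2 / 2))) := by
        have hc : Continuous (fun σ : ℝ => f (p + σ * v) *
            Real.exp (-(a * v * (p + σ * v - q)) ^ 2 / 2)) := by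
          exact (hf.comp (continuous_const.add (continuous_id.mul continuous_const))).mul
            (((continuous_const.mul
              ((continuous_const.add (continuous_id.mul continuous_const)).sub
                continuous_const)).pow 2 |>.neg.div_const 2).rexp)
        have := (hc.tendsto 0).mono_left (nhdsWithin_le_nhds (s := Set.Ioi (0:ℝ)))
        simpa using this
      refine hcont.congr' ?_
      filter_upwards [hev] with σ hσ
      exact (Set.indicator_of_mem (show v ∈ {v : ℝ | σ * |v| < r} from hσ)
        (fun v => f (p + σ * v) * Real.exp (-(a * v * (p + σ * v - q)) ^ 2 / 2))).symm
  have hval : (∫ v : ℝ, f p * Real.exp (-(a * v * (p - q)) ^ 2 / 2))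
      = f p * (Real.sqrt (2 * Real.pi) / |a * (p - q)|) := by
    rw [MeasureTheory.integral_const_mul]
    congr 1
    have e : (fun v : ℝ => Real.exp (-(a * v * (p - q)) ^ 2 / 2))
        = fun v : ℝ => Real.exp (-((a * (p - q)) * v) ^ 2 / 2) := by
      funext v; congr 2; ring
    rw [e, gauss_int _ hapq]
  rw [hval] at key
  exact key

private lemma subst_eq (a p q r : ℝ) (f : ℝ → ℝ) {σ : ℝ} (hσ : 0 < σ) :
    (∫ u, Set.indicator (Metric.ball p r)
        (fun u => f u * Real.exp (-(a * (u - p) * (u - q) / σ) ^ 2 / 2)) u) / σ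
      = ∫ v, Set.indicator {v : ℝ | σ * |v| < r}
        (fun v => f (p + σ * v) * Real.exp (-(a * v * (p + σ * v - q)) ^ 2 / 2)) v := by
  have hσ0 : σ ≠ 0 := ne_of_gt hσ
  set G : ℝ → ℝ := Set.indicator (Metric.ball p r)
      (fun u => f u * Real.exp (-(a * (u - p) * (u - q) / σ) ^ 2 / 2)) with hG
  have key : ∀ v : ℝ, Set.indicator {v : ℝ | σ * |v| < r}
      (fun v => f (p + σ * v) * Real.exp (-(a * v * (p + σ * v - q)) ^ 2 / 2)) v
      = G (p + σ * v) := by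
    intro v
    have hmem : (p + σ * v ∈ Metric.ball p r) ↔ σ * |v| < r := by
      rw [Metric.mem_ball, Real.dist_eq]
      have : p + σ * v - p = σ * v := by ring
      rw [this, abs_mul, abs_of_pos hσ]
    by_cases hv : σ * |v| < r
    · have hv' : v ∈ {v : ℝ | σ * |v| < r} := hv
      rw [Set.indicator_of_mem hv', hG, Set.indicator_of_mem (hmem.2 hv)]
      have harg : a * (p + σ * v - p) * (p + σ * v - q) / σ = a * v * (p + σ * v - q) := by
        field_simp
        ring
      rw [harg]
    · have hv' : v ∉ {v : ℝ | σ * |v| < r} := hv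
      rw [Set.indicator_of_notMem hv', hG,
        Set.indicator_of_notMem (fun h => hv (hmem.1 h))]
  rw [funext key]
  have h1 : (∫ v : ℝ, G (p + σ * v)) = ∫ v : ℝ, (fun w => G (p + w)) (σ * v) := by rfl
  rw [h1, MeasureTheory.Measure.integral_comp_mul_left (fun w => G (p + w)) σ,
    MeasureTheory.integral_add_left_eq_self G p]
  rw [abs_of_pos (inv_pos.2 hσ), smul_eq_mul, div_eq_mul_inv, mul_comm]

private lemma key_limit (a p q : ℝ) (ha : a ≠ 0) (hpq : p ≠ q)
    {f : ℝ → ℝ} (hf : Continuous f) {C : ℝ} (hC : ∀ u, |f u| ≤ C * Real.exp (-u ^ 2 / 2)) :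
    Tendsto (fun σ : ℝ => (∫ u, f u * Real.exp (-(a * (u - p) * (u - q) / σ) ^ 2 / 2)) / σ)
      (nhdsWithin 0 (Set.Ioi 0))
      (nhds (f p * (Real.sqrt (2 * Real.pi) / |a * (p - q)|)
           + f q * (Real.sqrt (2 * Real.pi) / |a * (q - p)|))) := by
  have hC0 : 0 ≤ C := C_nonneg hC
  have hpq0 : p - q ≠ 0 := sub_ne_zero.2 hpq
  set r : ℝ := |p - q| / 2 with hrdef
  have hr0 : 0 < r := by
    rw [hrdef]; positivity
  have hrp : r ≤ |p - q| / 2 := le_refl _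
  have hrq : r ≤ |q - p| / 2 := by rw [abs_sub_comm]
  set B₁ : Set ℝ := Metric.ball p r
  set B₂ : Set ℝ := Metric.ball q r
  set T : Set ℝ := (B₁ ∪ B₂)ᶜ with hT
  -- the integrand and its pieces
  set h : ℝ → ℝ → ℝ := fun σ u => f u * Real.exp (-(a * (u - p) * (u - q) / σ) ^ 2 / 2) with hh
  have hcont : ∀ σ, Continuous (h σ) := by
    intro σ
    exact hf.mul (((((continuous_const.mul (continuous_id.sub continuous_const)).mul
      (continuous_id.sub continuous_const)).div_const σ).pow 2 |>.neg.div_const 2).rexp)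
  have hbound : ∀ σ u, |h σ u| ≤ C * Real.exp (-u ^ 2 / 2) := by
    intro σ u
    rw [hh]
    simp only
    rw [abs_mul]
    have h1 : |Real.exp (-(a * (u - p) * (u - q) / σ) ^ 2 / 2)| ≤ 1 := by
      rw [abs_of_pos (Real.exp_pos _)]
      rw [show (1:ℝ) = Real.exp 0 by simp]
      apply Real.exp_le_exp.2
      nlinarith [sq_nonneg (a * (u - p) * (u - q) / σ)]
    calc |f u| * |Real.exp (-(a * (u - p) * (u - q) / σ) ^ 2 / 2)|
        ≤ (C * Real.exp (-u ^ 2 / 2)) * 1 :=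
          mul_le_mul (hC u) h1 (abs_nonneg _) (by positivity)
      _ = C * Real.exp (-u ^ 2 / 2) := mul_one _
  have hint : ∀ σ, Integrable (h σ) := by
    intro σ
    refine integ_aux hf ?_ hC ?_
    · exact ((((continuous_const.mul (continuous_id.sub continuous_const)).mul
        (continuous_id.sub continuous_const)).div_const σ).pow 2 |>.neg.div_const 2).rexp
    · intro u
      rw [abs_of_pos (Real.exp_pos _)]
      rw [show (1:ℝ) = Real.exp 0 by simp]
      apply Real.exp_le_exp.2
      nlinarith [sq_nonneg (a * (u - p) * (u - q) / σ)]
  have hdisj : ∀ u : ℝ, u ∈ B₁ → u ∉ B₂ := by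
    intro u h1 h2
    rw [Metric.mem_ball, Real.dist_eq] at h1 h2
    have := abs_sub_abs_le_abs_sub (u - q) (u - p)
    have h3 : |p - q| ≤ |u - p| + |u - q| := by
      have := abs_sub (u - p) (u - q)
      calc |p - q| = |(u - q) - (u - p)| := by ring_nf
        _ ≤ |u - q| + |u - p| := abs_sub _ _
        _ = |u - p| + |u - q| := by ring
    rw [hrdef] at h1 h2
    linarith
  -- split
  have hsplit : ∀ σ, (∫ u, h σ u)
      = (∫ u, Set.indicator B₁ (h σ) u) + (∫ u, Set.indicator B₂ (h σ) u)
        + (∫ u, Set.indicator T (h σ) u) := by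
    intro σ
    have hi1 : Integrable (Set.indicator B₁ (h σ)) :=
      (hint σ).indicator Metric.isOpen_ball.measurableSet
    have hi2 : Integrable (Set.indicator B₂ (h σ)) :=
      (hint σ).indicator Metric.isOpen_ball.measurableSet
    have hi3 : Integrable (Set.indicator T (h σ)) :=
      (hint σ).indicator (Metric.isOpen_ball.union Metric.isOpen_ball).isClosed_compl.measurableSet
    have hfun : ∀ u, h σ u = (Set.indicator B₁ (h σ) u + Set.indicator B₂ (h σ) u)
        + Set.indicator T (h σ) u := by
      intro u
      by_cases h1 : u ∈ B₁
      · have h2 : u ∉ B₂ := hdisj u h1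
        have h3 : u ∉ T := fun hc => hc (Set.mem_union_left B₂ h1)
        rw [Set.indicator_of_mem h1, Set.indicator_of_notMem h2, Set.indicator_of_notMem h3]
        ring
      · by_cases h2 : u ∈ B₂
        · have h3 : u ∉ T := fun hc => hc (Set.mem_union_right B₁ h2)
          rw [Set.indicator_of_mem h2, Set.indicator_of_notMem h1, Set.indicator_of_notMem h3]
          ring
        · have h3 : u ∈ T := by
            rw [hT, Set.mem_compl_iff, Set.mem_union]
            push_neg
            exact ⟨h1, h2⟩
          rw [Set.indicator_of_mem h3, Set.indicator_of_notMem h1, Set.indicator_of_notMem h2]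
          ring
    calc (∫ u, h σ u)
        = ∫ u, (Set.indicator B₁ (h σ) u + Set.indicator B₂ (h σ) u)
            + Set.indicator T (h σ) u := integral_congr_ae (ae_of_all _ hfun)
      _ = ((∫ u, Set.indicator B₁ (h σ) u) + ∫ u, Set.indicator B₂ (h σ) u)
            + ∫ u, Set.indicator T (h σ) u := by
          have hi12 : Integrable (fun u => Set.indicator B₁ (h σ) u
              + Set.indicator B₂ (h σ) u) := hi1.add hi2
          exact (integral_add hi12 hi3).trans
            (congrArg (· + ∫ u, Set.indicator T (h σ) u) (integral_add hi1 hi2))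
  -- term 1
  have ht1 : Tendsto (fun σ : ℝ => (∫ u, Set.indicator B₁ (h σ) u) / σ)
      (nhdsWithin 0 (Set.Ioi 0)) (nhds (f p * (Real.sqrt (2 * Real.pi) / |a * (p - q)|))) := by
    have := root_limit a p q ha hr0 hrp hf hC
    refine this.congr' ?_
    filter_upwards [self_mem_nhdsWithin] with σ hσ
    exact (subst_eq a p q r f hσ).symm
  -- term 2
  have ht2 : Tendsto (fun σ : ℝ => (∫ u, Set.indicator B₂ (h σ) u) / σ)
      (nhdsWithin 0 (Set.Ioi 0)) (nhds (f q * (Real.sqrt (2 * Real.pi) / |a * (q - p)|))) := by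
    have := root_limit a q p ha hr0 hrq hf hC
    refine this.congr' ?_
    filter_upwards [self_mem_nhdsWithin] with σ hσ
    have hfeq : (h σ) = (fun u => f u * Real.exp (-(a * (u - q) * (u - p) / σ) ^ 2 / 2)) := by
      funext u
      rw [hh]
      simp only
      congr 2
      ring
    have heq : Set.indicator B₂ (h σ) = Set.indicator (Metric.ball q r)
        (fun u => f u * Real.exp (-(a * (u - q) * (u - p) / σ) ^ 2 / 2)) := by
      rw [hfeq]
    rw [← subst_eq a q p r f hσ, heq]
  -- tail
  have ht3 : Tendsto (fun σ : ℝ => (∫ u, Set.indicator T (h σ) u) / σ)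
      (nhdsWithin 0 (Set.Ioi 0)) (nhds 0) := by
    set c : ℝ := |a| * r ^ 2 with hc
    have hc0 : 0 < c := by rw [hc]; positivity
    have hg : Tendsto (fun σ : ℝ => Real.exp (-(c/σ) ^ 2 / 2) / σ * (C * Real.sqrt (2 * Real.pi)))
        (nhdsWithin 0 (Set.Ioi 0)) (nhds 0) := by
      have := (tendsto_tail c hc0).mul_const (C * Real.sqrt (2 * Real.pi))
      simpa using this
    refine squeeze_zero_norm' ?_ hg
    filter_upwards [self_mem_nhdsWithin] with σ hσ
    have hσ0 : (0:ℝ) < σ := hσ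
    -- pointwise bound on T
    have hptw : ∀ u, ‖Set.indicator T (h σ) u‖
        ≤ Real.exp (-(c/σ) ^ 2 / 2) * (C * Real.exp (-u ^ 2 / 2)) := by
      intro u
      by_cases hu : u ∈ T
      · rw [Set.indicator_of_mem hu, Real.norm_eq_abs, hh]
        simp only
        rw [abs_mul]
        have hu1 : r ≤ |u - p| := by
          have : u ∉ B₁ := fun hb => hu (Set.mem_union_left _ hb)
          rw [Metric.mem_ball, Real.dist_eq, not_lt] at this
          exact this
        have hu2 : r ≤ |u - q| := by
          have : u ∉ B₂ := fun hb => hu (Set.mem_union_right _ hb)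
          rw [Metric.mem_ball, Real.dist_eq, not_lt] at this
          exact this
        have habs : c / σ ≤ |a * (u - p) * (u - q) / σ| := by
          rw [abs_div, abs_mul, abs_mul, abs_of_pos hσ0, hc]
          apply div_le_div_of_nonneg_right ?_ hσ0.le
          calc |a| * r ^ 2 = |a| * (r * r) := by ring
            _ ≤ |a| * (|u - p| * |u - q|) := by
                apply mul_le_mul_of_nonneg_left ?_ (abs_nonneg a)
                exact mul_le_mul hu1 hu2 (le_of_lt hr0) (abs_nonneg _)
            _ = |a| * |u - p| * |u - q| := by ring
        have hexp : Real.exp (-(a * (u - p) * (u - q) / σ) ^ 2 / 2)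
            ≤ Real.exp (-(c/σ) ^ 2 / 2) := by
          apply Real.exp_le_exp.2
          have h1 : (c/σ) ^ 2 ≤ (a * (u - p) * (u - q) / σ) ^ 2 := by
            rw [← sq_abs (a * (u - p) * (u - q) / σ)]
            apply pow_le_pow_left₀ (by positivity) habs
          linarith
        rw [abs_of_pos (Real.exp_pos _)]
        calc |f u| * Real.exp (-(a * (u - p) * (u - q) / σ) ^ 2 / 2)
            ≤ (C * Real.exp (-u ^ 2 / 2)) * Real.exp (-(c/σ) ^ 2 / 2) :=
              mul_le_mul (hC u) hexp (le_of_lt (Real.exp_pos _)) (by positivity)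
          _ = Real.exp (-(c/σ) ^ 2 / 2) * (C * Real.exp (-u ^ 2 / 2)) := by ring
      · rw [Set.indicator_of_notMem hu]
        simp only [norm_zero]
        positivity
    have hintT : Integrable (Set.indicator T (h σ)) :=
      (hint σ).indicator (Metric.isOpen_ball.union Metric.isOpen_ball).isClosed_compl.measurableSet
    have hibound : Integrable (fun u : ℝ => Real.exp (-(c/σ) ^ 2 / 2) * (C * Real.exp (-u ^ 2 / 2))) :=
      (gauss_integrable.const_mul C).const_mul _
    have hnorm : ‖∫ u, Set.indicator T (h σ) u‖
        ≤ Real.exp (-(c/σ) ^ 2 / 2) * (C * Real.sqrt (2 * Real.pi)) := by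
      have := norm_integral_le_of_norm_le hibound (ae_of_all _ hptw)
      refine le_trans this ?_
      rw [MeasureTheory.integral_const_mul, MeasureTheory.integral_const_mul, gauss_int_one]
    rw [norm_div, Real.norm_eq_abs σ, abs_of_pos hσ0]
    calc ‖∫ u, Set.indicator T (h σ) u‖ / σ
        ≤ (Real.exp (-(c/σ) ^ 2 / 2) * (C * Real.sqrt (2 * Real.pi))) / σ :=
          div_le_div_of_nonneg_right hnorm hσ0.le
      _ = Real.exp (-(c/σ) ^ 2 / 2) / σ * (C * Real.sqrt (2 * Real.pi)) := by ring
  -- combine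
  have hsum := (ht1.add ht2).add ht3
  rw [add_zero] at hsum
  refine hsum.congr' ?_
  filter_upwards [self_mem_nhdsWithin] with σ hσ
  rw [← add_div, ← add_div, ← hsplit σ]

/-- As `σ_ε → 0⁺`, the posterior distribution of `u` given `y` in the model
`y = φx + σ_u(u + δu²) + σ_ε ε`, `ε ~ N(0,1)`, prior `u ~ N(0,1)`, concentrates on the
two roots `u⁽¹⁾, u⁽²⁾` of `σ_u δ u² + σ_u u + φx - y = 0`, with limiting weights
proportional to `φ(u⁽ⁱ⁾;0,1) / |σ_u (1 + 2δ u⁽ⁱ⁾)|`: posterior expectations of bounded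
continuous functions converge to the corresponding two-point mixture expectations. -/
theorem posterior_concentrates_on_two_roots
    (φ x σu δ y : ℝ) (hσu : σu ≠ 0) (hδ : δ ≠ 0)
    (u₁ u₂ : ℝ)
    (h₁ : σu * δ * u₁ ^ 2 + σu * u₁ + φ * x - y = 0)
    (h₂ : σu * δ * u₂ ^ 2 + σu * u₂ + φ * x - y = 0)
    (hne : u₁ ≠ u₂)
    (hs₁ : 1 + 2 * δ * u₁ ≠ 0) (hs₂ : 1 + 2 * δ * u₂ ≠ 0)
    (nd : ℝ → ℝ) (hnd : ∀ t, nd t = Real.exp (-t ^ 2 / 2) / Real.sqrt (2 * Real.pi))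
    (w : ℝ → ℝ) (hw : ∀ u, w u = nd u / |σu * (1 + 2 * δ * u)|) :
    ∀ m : ℝ → ℝ, Continuous m → (∃ C, ∀ u, |m u| ≤ C) →
      Tendsto
        (fun σe : ℝ =>
          (∫ u, m u * nd ((y - φ * x - σu * (u + δ * u ^ 2)) / σe) * nd u) /
            ∫ u, nd ((y - φ * x - σu * (u + δ * u ^ 2)) / σe) * nd u)
        (nhdsWithin 0 (Set.Ioi 0))
        (nhds ((w u₁ * m u₁ + w u₂ * m u₂) / (w u₁ + w u₂))) := by
  intro m hm ⟨C, hmC⟩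
  -- Vieta relation
  have hsum : σu * δ * (u₁ + u₂) + σu = 0 := by
    have hfac : (u₁ - u₂) * (σu * δ * (u₁ + u₂) + σu) = 0 := by
      linear_combination h₁ - h₂
    rcases mul_eq_zero.1 hfac with h | h
    · exact absurd (sub_eq_zero.1 h) hne
    · exact h
  have hg : ∀ u : ℝ, y - φ * x - σu * (u + δ * u ^ 2)
      = -((σu * δ) * (u - u₁) * (u - u₂)) := by
    intro u
    linear_combination (u₁ - u) * hsum - h₁
  have hd₁ : σu * (1 + 2 * δ * u₁) = (σu * δ) * (u₁ - u₂) := by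
    linear_combination hsum
  have hd₂ : σu * (1 + 2 * δ * u₂) = (σu * δ) * (u₂ - u₁) := by
    linear_combination hsum
  set a : ℝ := σu * δ with hadef
  have ha : a ≠ 0 := by
    rw [hadef]; exact mul_ne_zero hσu hδ
  set s : ℝ := Real.sqrt (2 * Real.pi) with hsdef
  have hs0 : 0 < s := by
    rw [hsdef]
    exact Real.sqrt_pos.2 (by positivity)
  -- functions for the key lemma
  set fN : ℝ → ℝ := fun u => m u * Real.exp (-u ^ 2 / 2) with hfN
  set fD : ℝ → ℝ := fun u => Real.exp (-u ^ 2 / 2) with hfD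
  have hfNc : Continuous fN := hm.mul (by fun_prop)
  have hfDc : Continuous fD := by fun_prop
  have hCN : ∀ u, |fN u| ≤ C * Real.exp (-u ^ 2 / 2) := by
    intro u
    rw [hfN]
    simp only
    rw [abs_mul, abs_of_pos (Real.exp_pos _)]
    exact mul_le_mul_of_nonneg_right (hmC u) (le_of_lt (Real.exp_pos _))
  have hCD : ∀ u, |fD u| ≤ 1 * Real.exp (-u ^ 2 / 2) := by
    intro u
    rw [hfD, one_mul]
    simp only
    rw [abs_of_pos (Real.exp_pos _)]
  have hkeyN := key_limit a u₁ u₂ ha hne hfNc hCN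
  have hkeyD := key_limit a u₁ u₂ ha hne hfDc hCD
  -- limits
  set LN : ℝ := fN u₁ * (s / |a * (u₁ - u₂)|) + fN u₂ * (s / |a * (u₂ - u₁)|) with hLN
  set LD : ℝ := fD u₁ * (s / |a * (u₁ - u₂)|) + fD u₂ * (s / |a * (u₂ - u₁)|) with hLD
  have hw₁ : w u₁ = Real.exp (-u₁ ^ 2 / 2) / (s * |a * (u₁ - u₂)|) := by
    rw [hw, hnd, hd₁, div_div]
  have hw₂ : w u₂ = Real.exp (-u₂ ^ 2 / 2) / (s * |a * (u₂ - u₁)|) := by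
    rw [hw, hnd, hd₂, div_div]
  have hau : a * (u₁ - u₂) ≠ 0 := mul_ne_zero ha (sub_ne_zero.2 hne)
  have hau' : a * (u₂ - u₁) ≠ 0 := mul_ne_zero ha (sub_ne_zero.2 (Ne.symm hne))
  have habs1 : 0 < |a * (u₁ - u₂)| := abs_pos.2 hau
  have habs2 : 0 < |a * (u₂ - u₁)| := abs_pos.2 hau'
  have hw₁pos : 0 < w u₁ := by
    rw [hw₁]; positivity
  have hw₂pos : 0 < w u₂ := by
    rw [hw₂]; positivity
  have hLNe : LN = s ^ 2 * (w u₁ * m u₁ + w u₂ * m u₂) := by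
    rw [hLN, hw₁, hw₂, hfN]
    simp only
    field_simp
  have hLDe : LD = s ^ 2 * (w u₁ + w u₂) := by
    rw [hLD, hw₁, hw₂, hfD]
    simp only
    field_simp
  have hLD0 : LD ≠ 0 := by
    rw [hLDe]
    positivity
  have hdiv := hkeyN.div hkeyD hLD0
  have hfinal : LN / LD = (w u₁ * m u₁ + w u₂ * m u₂) / (w u₁ + w u₂) := by
    rw [hLNe, hLDe]
    rw [mul_div_mul_left _ _ (by positivity : (s:ℝ) ^ 2 ≠ 0)]
  rw [← hfinal]
  refine hdiv.congr' ?_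
  filter_upwards [self_mem_nhdsWithin] with σ hσ
  have hσ0 : (0:ℝ) < σ := hσ
  have hσne : σ ≠ 0 := ne_of_gt hσ0
  -- rewrite the original quotient
  have hnum : (∫ u, m u * nd ((y - φ * x - σu * (u + δ * u ^ 2)) / σ) * nd u)
      = (s ^ 2)⁻¹ * ∫ u, fN u * Real.exp (-(a * (u - u₁) * (u - u₂) / σ) ^ 2 / 2) := by
    rw [← MeasureTheory.integral_const_mul]
    congr 1
    funext u
    rw [hnd, hnd, hg u, hfN]
    simp only
    rw [show (-(a * (u - u₁) * (u - u₂)) / σ) ^ 2 = (a * (u - u₁) * (u - u₂) / σ) ^ 2 by ring]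
    ring
  have hden : (∫ u, nd ((y - φ * x - σu * (u + δ * u ^ 2)) / σ) * nd u)
      = (s ^ 2)⁻¹ * ∫ u, fD u * Real.exp (-(a * (u - u₁) * (u - u₂) / σ) ^ 2 / 2) := by
    rw [← MeasureTheory.integral_const_mul]
    congr 1
    funext u
    rw [hnd, hnd, hg u, hfD]
    simp only
    rw [show (-(a * (u - u₁) * (u - u₂)) / σ) ^ 2 = (a * (u - u₁) * (u - u₂) / σ) ^ 2 by ring]
    ring
  have hq : ∀ X Y : ℝ, (X / σ) / (Y / σ) = X / Y := by
    intro X Y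
    by_cases hY : Y = 0
    · simp [hY]
    · field_simp
  show ((∫ u, fN u * Real.exp (-(a * (u - u₁) * (u - u₂) / σ) ^ 2 / 2)) / σ)
      / ((∫ u, fD u * Real.exp (-(a * (u - u₁) * (u - u₂) / σ) ^ 2 / 2)) / σ)
      = _
  rw [hnum, hden, hq, mul_div_mul_left _ _ (by positivity : ((s:ℝ) ^ 2)⁻¹ ≠ 0)]
end

section
/- Let Γ_0 = β̄G/(G^γ - β̄G) and let f(s) = β̄ G^{1-γ} exp(γ(1-φ)s) (1 + v(φs)) for a price-dividend function v satisfying the deterministic fixed point v(s) = β̄ G^{1-γ} exp(γ(1-φ)s)(1 + v(φs)). Then v(0) = Γ_0 and v'(0) = Γ_1 where Γ_1 = (1-φ) G^{γ+1} β̄ γ / ((G^γ - β̄G)(G^γ - φβ̄G)), provided β̄G < G^γ and φβ̄G < G^γ. -/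
/-- Deterministic fixed point of the asset pricing Euler equation: if the
price-dividend function `v` satisfies
`v(s) = β̄ G^{1-γ} exp(γ(1-φ)s)(1 + v(φs))` with `β̄G < G^γ` and `φβ̄G < G^γ`, then
`v(0) = Γ₀ = β̄G/(G^γ - β̄G)` and
`v'(0) = Γ₁ = (1-φ) G^{γ+1} β̄ γ / ((G^γ - β̄G)(G^γ - φβ̄G))`. -/
theorem asset_pricing_taylor_coefficients
    (β' G γ φ : ℝ) (hG : 0 < G) (hβ : 0 < β')
    (h1 : β' * G < G ^ γ) (h2 : φ * (β' * G) < G ^ γ)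
    (v : ℝ → ℝ) (hdiff : DifferentiableAt ℝ v 0)
    (hfix : ∀ s, v s = β' * G ^ (1 - γ) * Real.exp (γ * (1 - φ) * s) * (1 + v (φ * s))) :
    v 0 = β' * G / (G ^ γ - β' * G) ∧
      deriv v 0 =
        (1 - φ) * G ^ (γ + 1) * β' * γ /
          ((G ^ γ - β' * G) * (G ^ γ - φ * (β' * G))) := by
  have hA : (0:ℝ) < G ^ γ := Real.rpow_pos_of_pos hG γ
  have hGpow : G ^ (1 - γ) = G / G ^ γ := by
    rw [Real.rpow_sub hG, Real.rpow_one]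
  have hGpow1 : G ^ (γ + 1) = G ^ γ * G := by
    rw [Real.rpow_add hG, Real.rpow_one]
  have hden1 : G ^ γ - β' * G ≠ 0 := by linarith
  have hden2 : G ^ γ - φ * (β' * G) ≠ 0 := by linarith
  have hAne : G ^ γ ≠ 0 := ne_of_gt hA
  have h0 : v 0 = β' * (G / G ^ γ) * (1 + v 0) := by
    have := hfix 0
    rw [hGpow] at this
    simpa using this
  have hv0 : v 0 = β' * G / (G ^ γ - β' * G) := by
    field_simp at h0 ⊢
    linarith [h0]
  refine ⟨hv0, ?_⟩
  -- derivative of the RHS at 0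
  have hv' : HasDerivAt v (deriv v 0) (φ * 0) := by
    simpa using hdiff.hasDerivAt
  have hlin : HasDerivAt (fun s : ℝ => φ * s) φ 0 := by
    simpa using (hasDerivAt_id (0:ℝ)).const_mul φ
  have hvφ : HasDerivAt (fun s => v (φ * s)) (deriv v 0 * φ) 0 :=
    hv'.comp 0 hlin
  have hB : HasDerivAt (fun s => 1 + v (φ * s)) (deriv v 0 * φ) 0 :=
    (hvφ.const_add 1)
  have hE : HasDerivAt (fun s : ℝ => Real.exp (γ * (1 - φ) * s)) (γ * (1 - φ)) 0 := by
    have : HasDerivAt (fun s : ℝ => γ * (1 - φ) * s) (γ * (1 - φ)) 0 := by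
      simpa using (hasDerivAt_id (0:ℝ)).const_mul (γ * (1 - φ))
    simpa using this.exp
  have hEB := hE.mul hB
  have hH := hEB.const_mul (β' * G ^ (1 - γ))
  have hveq : v = fun s => β' * G ^ (1 - γ) * (Real.exp (γ * (1 - φ) * s) * (1 + v (φ * s))) := by
    funext s
    rw [hfix s, mul_assoc]
  have hderiv : deriv v 0 =
      β' * G ^ (1 - γ) * (γ * (1 - φ) * (1 + v (φ * 0)) +
        Real.exp (γ * (1 - φ) * 0) * (deriv v 0 * φ)) := by
    conv_lhs => rw [hveq]
    exact hH.deriv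
  -- simplify
  simp only [mul_zero, Real.exp_zero, mul_one] at hderiv
  rw [hv0, hGpow] at hderiv
  rw [hGpow1]
  set D := deriv v 0
  field_simp at hderiv ⊢
  have hden3 : G ^ γ - β' * G * φ ≠ 0 := by
    intro h; apply hden2; linarith
  rw [eq_div_iff hden3]
  linear_combination hderiv
end
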